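/- Suppose P_N belongs to Panjer(a(Θ), b(Θ); 0) and that a∘Θ and b∘Θ are P-integrable. Then for every integer n ≥ 1, P(N = n) = ∫_Ω 1_{{N = n−1}}(ω) · (a(Θ(ω)) + b(Θ(ω))/n) dP(ω). In particular, with μ_{n−1}(A) := P(A ∩ {N = n−1})/P(N = n−1) whenever P(N = n−1) > 0, one has P(N = n) = C_n · P(N = n−1) where C_n := ∫_Ω (a(Θ) + b(Θ)/n) dμ_{n−1}. -/

import Mathlib

open MeasureTheory ProbabilityTheory

/-- Auxiliary: consistency of the rcp implies that, for a.e. `θ`, the function `g ∘ Θ`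
is `Pθ θ`-a.s. equal to `g θ`. -/
lemma cons_fun_eq_one {Ω α : Type*} [MeasurableSpace Ω] [MeasurableSpace α]
    (μ : Measure α) (Θ : Ω → α) (hΘ : Measurable Θ)
    (Pθ : α → Measure Ω) (hprob : ∀ θ, IsProbabilityMeasure (Pθ θ))
    (hcons : ∀ B : Set α, MeasurableSet B →
      ∀ᵐ θ ∂(μ.restrict B), Pθ θ (Θ ⁻¹' B) = 1)
    (g : α → ℝ) (hg : Measurable g) :
    ∀ᵐ θ ∂μ, Pθ θ {ω | g (Θ ω) = g θ} = 1 := by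
  have h1 : ∀ q : ℚ, ∀ᵐ θ ∂μ,
      (g θ ≤ (q : ℝ) → Pθ θ {ω | g (Θ ω) ≤ (q : ℝ)} = 1) ∧
      ((q : ℝ) < g θ → Pθ θ {ω | (q : ℝ) < g (Θ ω)} = 1) := by
    intro q
    have hB : MeasurableSet {θ' | g θ' ≤ (q : ℝ)} :=
      measurableSet_le hg measurable_const
    have hA := (ae_restrict_iff' hB).mp (hcons _ hB)
    have hA' := (ae_restrict_iff' hB.compl).mp (hcons _ hB.compl)
    filter_upwards [hA, hA'] with θ hθ1 hθ2
    constructor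
    · intro h; exact hθ1 h
    · intro h
      have := hθ2 (by simpa [not_le] using h)
      have heq : (Θ ⁻¹' {θ' | g θ' ≤ (q : ℝ)}ᶜ) = {ω | (q : ℝ) < g (Θ ω)} := by
        ext ω; simp [not_le]
      rwa [heq] at this
  rw [← ae_all_iff] at h1
  filter_upwards [h1] with θ H
  haveI := hprob θ
  -- the "bad" set is null
  have hnull : ∀ q : ℚ,
      Pθ θ ({ω | g (Θ ω) ≤ (q : ℝ) ∧ (q : ℝ) < g θ}
        ∪ {ω | g θ ≤ (q : ℝ) ∧ (q : ℝ) < g (Θ ω)}) = 0 := by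
    intro q
    obtain ⟨hle, hlt⟩ := H q
    apply measure_union_null
    · by_cases hq : (q : ℝ) < g θ
      · have h1' := hlt hq
        have hms : MeasurableSet {ω | (q : ℝ) < g (Θ ω)} :=
          measurableSet_lt measurable_const (hg.comp hΘ)
        have hc : Pθ θ {ω | (q : ℝ) < g (Θ ω)}ᶜ = 0 := by
          rw [measure_compl hms (measure_ne_top _ _), h1', measure_univ, tsub_self]
        refine measure_mono_null ?_ hc
        intro ω hω
        simp only [Set.mem_compl_iff, Set.mem_setOf_eq, not_lt]
        exact hω.1
      · refine measure_mono_null (fun ω hω => (hq hω.2).elim) measure_empty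
    · by_cases hq : g θ ≤ (q : ℝ)
      · have h1' := hle hq
        have hms : MeasurableSet {ω | g (Θ ω) ≤ (q : ℝ)} :=
          measurableSet_le (hg.comp hΘ) measurable_const
        have hc : Pθ θ {ω | g (Θ ω) ≤ (q : ℝ)}ᶜ = 0 := by
          rw [measure_compl hms (measure_ne_top _ _), h1', measure_univ, tsub_self]
        refine measure_mono_null ?_ hc
        intro ω hω
        simp only [Set.mem_compl_iff, Set.mem_setOf_eq, not_le]
        exact hω.2
      · refine measure_mono_null (fun ω hω => (hq hω.1).elim) measure_empty
  have hT : Pθ θ {ω | g (Θ ω) ≠ g θ} = 0 := by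
    refine measure_mono_null ?_ (measure_iUnion_null hnull)
    intro ω hω
    rcases lt_or_gt_of_ne hω with h | h
    · obtain ⟨q, hq1, hq2⟩ := exists_rat_btwn h
      exact Set.mem_iUnion.mpr ⟨q, Or.inl ⟨le_of_lt hq1, hq2⟩⟩
    · obtain ⟨q, hq1, hq2⟩ := exists_rat_btwn h
      exact Set.mem_iUnion.mpr ⟨q, Or.inr ⟨le_of_lt hq1, hq2⟩⟩
  have hms : MeasurableSet {ω | g (Θ ω) = g θ} :=
    measurableSet_eq_fun (hg.comp hΘ) measurable_const
  have : Pθ θ {ω | g (Θ ω) = g θ}ᶜ = 0 := by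
    refine measure_mono_null ?_ hT
    intro ω hω; exact hω
  rw [measure_compl hms (measure_ne_top _ _), measure_univ] at this
  have h01 : Pθ θ {ω | g (Θ ω) = g θ} ≤ 1 := prob_le_one
  exact le_antisymm h01 (tsub_eq_zero_iff_le.mp this)

/-- Recursion `P(N = n) = C_n · P(N = n−1)` for members of the mixed
Panjer(a(Θ), b(Θ); 0) class, where `C_n` is the `μ_{n−1}`-expectation of `a(Θ) + b(Θ)/n`. -/
theorem mixed_panjer_pmf_recursion
    {Ω : Type*} [MeasurableSpace Ω] (P : Measure Ω) [IsProbabilityMeasure P]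
    (d : ℕ) (hd : 1 ≤ d) (D : Set (Fin d → ℝ)) (hD : MeasurableSet D)
    (Θ : Ω → (Fin d → ℝ)) (hΘ : Measurable Θ) (hΘD : ∀ ω, Θ ω ∈ D)
    (Pθ : (Fin d → ℝ) → Measure Ω) (hPθprob : ∀ θ, IsProbabilityMeasure (Pθ θ))
    (hmeas : ∀ E : Set Ω, MeasurableSet E → Measurable fun θ => Pθ θ E)
    (hint : ∀ E : Set Ω, MeasurableSet E → ∫⁻ θ, Pθ θ E ∂(P.map Θ) = P E)
    (hcons : ∀ B : Set (Fin d → ℝ), MeasurableSet B →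
      ∀ᵐ θ ∂((P.map Θ).restrict B), Pθ θ (Θ ⁻¹' B) = 1)
    (N : Ω → ℕ) (hN : Measurable N)
    (a b : (Fin d → ℝ) → ℝ) (ha : Measurable a) (hb : Measurable b)
    (hainta : Integrable (fun ω => a (Θ ω)) P)
    (haintb : Integrable (fun ω => b (Θ ω)) P)
    (hPanjer : ∀ᵐ θ ∂(P.map Θ), ∀ n : ℕ, 1 ≤ n →
      (Pθ θ {ω | N ω = n}).toReal
        = (a θ + b θ / (n : ℝ)) * (Pθ θ {ω | N ω = n - 1}).toReal) :
    ∀ n : ℕ, 1 ≤ n →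
      ((P {ω | N ω = n}).toReal
          = ∫ ω, Set.indicator {ω' | N ω' = n - 1} (fun _ => (1 : ℝ)) ω
              * (a (Θ ω) + b (Θ ω) / (n : ℝ)) ∂P)
      ∧ (P {ω | N ω = n - 1} ≠ 0 →
          (P {ω | N ω = n}).toReal
            = (∫ ω, (a (Θ ω) + b (Θ ω) / (n : ℝ))
                  ∂((P {ω' | N ω' = n - 1})⁻¹ • P.restrict {ω' | N ω' = n - 1}))
              * (P {ω | N ω = n - 1}).toReal) := by
  intro n hn
  set μ : Measure (Fin d → ℝ) := P.map Θ with hμdef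
  set g : (Fin d → ℝ) → ℝ := fun θ => a θ + b θ / (n : ℝ) with hgdef
  have hg : Measurable g := ha.add (hb.div_const _)
  set E : Set Ω := {ω | N ω = n} with hEdef
  set E' : Set Ω := {ω | N ω = n - 1} with hE'def
  have hE : MeasurableSet E := hN (measurableSet_singleton n)
  have hE' : MeasurableSet E' := hN (measurableSet_singleton (n - 1))
  have hgint : Integrable (fun ω => g (Θ ω)) P := hainta.add (haintb.div_const _)
  have hPm : Measurable Pθ := Measure.measurable_of_measurable_coe _ (fun s hs => hmeas s hs)
  have hPbind : P = μ.bind Pθ := by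
    refine Measure.ext fun s hs => ?_
    rw [Measure.bind_apply hs hPm.aemeasurable, hint s hs]
  have haeg : ∀ᵐ θ ∂μ, Pθ θ {ω | g (Θ ω) = g θ} = 1 :=
    cons_fun_eq_one μ Θ hΘ Pθ hPθprob hcons g hg
  -- inner lintegral computation, positive and negative parts
  have hinner : ∀ᵐ θ ∂μ,
      (∫⁻ ω, ENNReal.ofReal (E'.indicator (fun ω' => g (Θ ω')) ω) ∂(Pθ θ)
          = ENNReal.ofReal (g θ) * Pθ θ E') ∧
      (∫⁻ ω, ENNReal.ofReal (-(E'.indicator (fun ω' => g (Θ ω')) ω)) ∂(Pθ θ)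
          = ENNReal.ofReal (-(g θ)) * Pθ θ E') := by
    filter_upwards [haeg] with θ hθ
    haveI := hPθprob θ
    have hms : MeasurableSet {ω | g (Θ ω) = g θ} :=
      measurableSet_eq_fun (hg.comp hΘ) measurable_const
    have hae : ∀ᵐ ω ∂(Pθ θ), g (Θ ω) = g θ := by
      rw [ae_iff]
      have : Pθ θ {ω | g (Θ ω) = g θ}ᶜ = 0 := by
        rw [measure_compl hms (measure_ne_top _ _), hθ, measure_univ, tsub_self]
      refine measure_mono_null ?_ this
      intro ω hω; exact hω
    constructor
    · calc ∫⁻ ω, ENNReal.ofReal (E'.indicator (fun ω' => g (Θ ω')) ω) ∂(Pθ θ)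
          = ∫⁻ ω, E'.indicator (fun _ => ENNReal.ofReal (g θ)) ω ∂(Pθ θ) := by
            refine lintegral_congr_ae ?_
            filter_upwards [hae] with ω hω
            by_cases hmem : ω ∈ E'
            · simp [Set.indicator_of_mem hmem, hω]
            · simp [Set.indicator_of_notMem hmem]
        _ = ENNReal.ofReal (g θ) * Pθ θ E' := by
            rw [lintegral_indicator hE', setLIntegral_const]
    · calc ∫⁻ ω, ENNReal.ofReal (-(E'.indicator (fun ω' => g (Θ ω')) ω)) ∂(Pθ θ)
          = ∫⁻ ω, E'.indicator (fun _ => ENNReal.ofReal (-(g θ))) ω ∂(Pθ θ) := by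
            refine lintegral_congr_ae ?_
            filter_upwards [hae] with ω hω
            by_cases hmem : ω ∈ E'
            · simp [Set.indicator_of_mem hmem, hω]
            · simp [Set.indicator_of_notMem hmem]
        _ = ENNReal.ofReal (-(g θ)) * Pθ θ E' := by
            rw [lintegral_indicator hE', setLIntegral_const]
  -- the RHS of part 1 as indicator integral
  have hind_eq : (fun ω => Set.indicator E' (fun _ => (1 : ℝ)) ω * (a (Θ ω) + b (Θ ω) / (n : ℝ)))
      = E'.indicator (fun ω => g (Θ ω)) := by
    funext ω
    by_cases hmem : ω ∈ E'
    · simp [Set.indicator_of_mem hmem, hgdef]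
    · simp [Set.indicator_of_notMem hmem]
  have hindint : Integrable (E'.indicator (fun ω => g (Θ ω))) P := hgint.indicator hE'
  have hindmeas : Measurable (E'.indicator (fun ω => g (Θ ω))) := (hg.comp hΘ).indicator hE'
  -- positive/negative part lintegrals over P via bind
  have hposP : ∫⁻ ω, ENNReal.ofReal (E'.indicator (fun ω' => g (Θ ω')) ω) ∂P
      = ∫⁻ θ, ENNReal.ofReal (g θ) * Pθ θ E' ∂μ := by
    rw [hPbind, Measure.lintegral_bind hPm.aemeasurable hindmeas.ennreal_ofReal.aemeasurable]
    exact lintegral_congr_ae (hinner.mono fun θ h => h.1)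
  have hnegP : ∫⁻ ω, ENNReal.ofReal (-(E'.indicator (fun ω' => g (Θ ω')) ω)) ∂P
      = ∫⁻ θ, ENNReal.ofReal (-(g θ)) * Pθ θ E' ∂μ := by
    rw [hPbind, Measure.lintegral_bind (f := fun ω => ENNReal.ofReal (-(E'.indicator (fun ω' => g (Θ ω')) ω)))
      hPm.aemeasurable hindmeas.neg.ennreal_ofReal.aemeasurable]
    exact lintegral_congr_ae (hinner.mono fun θ h => h.2)
  -- integrability of F θ = g θ * (Pθ θ E').toReal over μ
  have hgμ : Integrable g μ := by
    rw [hμdef]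
    exact (integrable_map_measure hg.aestronglyMeasurable hΘ.aemeasurable).mpr hgint
  have hFmeas : Measurable (fun θ => g θ * (Pθ θ E').toReal) :=
    hg.mul (hmeas E' hE').ennreal_toReal
  have hFint : Integrable (fun θ => g θ * (Pθ θ E').toReal) μ := by
    refine hgμ.mono hFmeas.aestronglyMeasurable ?_
    refine Filter.Eventually.of_forall fun θ => ?_
    haveI := hPθprob θ
    have h1 : (Pθ θ E').toReal ≤ 1 := by
      have := prob_le_one (μ := Pθ θ) (s := E')
      simpa using ENNReal.toReal_le_of_le_ofReal zero_le_one (by simpa using this)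
    have h0 : (0:ℝ) ≤ (Pθ θ E').toReal := ENNReal.toReal_nonneg
    rw [Real.norm_eq_abs, Real.norm_eq_abs, abs_mul, abs_of_nonneg h0]
    nlinarith [abs_nonneg (g θ)]
  -- Part 1 main computation
  have key : (P E).toReal = ∫ ω, E'.indicator (fun ω' => g (Θ ω')) ω ∂P := by
    have step1 : (P E).toReal = ∫ θ, (Pθ θ E).toReal ∂μ := by
      rw [← hint E hE]
      exact (integral_toReal (hmeas E hE).aemeasurable
        (Filter.Eventually.of_forall fun θ => by haveI := hPθprob θ; exact measure_lt_top _ _)).symm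
    have step2 : ∫ θ, (Pθ θ E).toReal ∂μ = ∫ θ, g θ * (Pθ θ E').toReal ∂μ := by
      refine integral_congr_ae ?_
      filter_upwards [hPanjer] with θ hθ
      exact hθ n hn
    have step3 : ∫ θ, g θ * (Pθ θ E').toReal ∂μ
        = (∫⁻ θ, ENNReal.ofReal (g θ) * Pθ θ E' ∂μ).toReal
          - (∫⁻ θ, ENNReal.ofReal (-(g θ)) * Pθ θ E' ∂μ).toReal := by
      rw [integral_eq_lintegral_pos_part_sub_lintegral_neg_part hFint]
      congr 1
      · congr 1
        refine lintegral_congr fun θ => ?_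
        rw [ENNReal.ofReal_mul' ENNReal.toReal_nonneg,
          ENNReal.ofReal_toReal (measure_ne_top _ _)]
      · congr 1
        refine lintegral_congr fun θ => ?_
        rw [neg_mul_eq_neg_mul, ENNReal.ofReal_mul' ENNReal.toReal_nonneg,
          ENNReal.ofReal_toReal (measure_ne_top _ _)]
    have step4 : ∫ ω, E'.indicator (fun ω' => g (Θ ω')) ω ∂P
        = (∫⁻ ω, ENNReal.ofReal (E'.indicator (fun ω' => g (Θ ω')) ω) ∂P).toReal
          - (∫⁻ ω, ENNReal.ofReal (-(E'.indicator (fun ω' => g (Θ ω')) ω)) ∂P).toReal :=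
      integral_eq_lintegral_pos_part_sub_lintegral_neg_part hindint
    rw [step1, step2, step3, step4, hposP, hnegP]
  constructor
  · rw [key, hind_eq]
  · intro hne
    haveI := hPθprob
    have hcR : (P E').toReal ≠ 0 := ENNReal.toReal_ne_zero.mpr ⟨hne, measure_ne_top _ _⟩
    have hμ' : ∫ ω, (a (Θ ω) + b (Θ ω) / (n : ℝ)) ∂((P E')⁻¹ • P.restrict E')
        = ((P E')⁻¹).toReal * ∫ ω, g (Θ ω) ∂(P.restrict E') := by
      rw [integral_smul_measure]; rfl
    have hrestrict : ∫ ω, g (Θ ω) ∂(P.restrict E')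
        = ∫ ω, E'.indicator (fun ω' => g (Θ ω')) ω ∂P := by
      rw [integral_indicator hE']
    rw [hμ', hrestrict, ← key, ENNReal.toReal_inv]
    field_simp
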